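/- Let p ≥ 5 be an odd prime. Then, modulo 2, the generating function F_p̄(q) = (q²;q²)_∞(q^p;q^p)_∞^{(p+1)/2}/((q;q)_∞(q^{2p};q^{2p})_∞) is coefficientwise congruent to (q;q)_∞ · (q^p;q^p)_∞^{(p−3)/2}. -/

import Mathlib

open scoped Classical
open PowerSeries Finset

noncomputable def euler (c : ℕ) : PowerSeries ℤ :=
  PowerSeries.mk fun d =>
    PowerSeries.coeff (R := ℤ) d
      (∏ n ∈ Finset.range (d + 1), (1 - (PowerSeries.X : PowerSeries ℤ) ^ (c * (n + 1))))

noncomputable def eulerInv (c : ℕ) : PowerSeries ℤ := (euler c).invOfUnit 1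

private noncomputable def P (c m : ℕ) : PowerSeries ℤ :=
  ∏ n ∈ Finset.range m, (1 - (PowerSeries.X : PowerSeries ℤ) ^ (c * (n + 1)))

private lemma coeff_euler (c d m : ℕ) (hc : 1 ≤ c) (hm : d + 1 ≤ m) :
    PowerSeries.coeff (R := ℤ) d (euler c) = PowerSeries.coeff (R := ℤ) d (P c m) := by
  have base : PowerSeries.coeff (R := ℤ) d (euler c) = PowerSeries.coeff (R := ℤ) d (P c (d + 1)) := by
    simp [euler, P]
  induction m with
  | zero => omega
  | succ m ih =>
    rcases Nat.lt_or_ge (d + 1) (m + 1) with h | h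
    · have hdm : d + 1 ≤ m := by omega
      rw [ih hdm]
      have : P c (m + 1) = P c m * (1 - PowerSeries.X ^ (c * (m + 1))) := by
        simp [P, Finset.prod_range_succ]
      rw [this, mul_sub, mul_one, map_sub]
      have hz : PowerSeries.coeff (R := ℤ) d (P c m * PowerSeries.X ^ (c * (m + 1))) = 0 := by
        rw [PowerSeries.coeff_mul_X_pow']
        have : ¬ c * (m + 1) ≤ d := by nlinarith
        simp [this]
      rw [hz, sub_zero]
    · have : m = d := by omega
      subst this
      exact base

private lemma constCoeff_euler (c : ℕ) (hc : 1 ≤ c) :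
    PowerSeries.constantCoeff (R := ℤ) (euler c) = 1 := by
  have := coeff_euler c 0 1 hc le_rfl
  rw [← PowerSeries.coeff_zero_eq_constantCoeff, this]
  simp [P]
  intro h
  omega

private noncomputable def phi : PowerSeries ℤ →+* PowerSeries (ZMod 2) :=
  PowerSeries.map (Int.castRingHom (ZMod 2))

private lemma two_eq_zero : (2 : PowerSeries (ZMod 2)) = 0 := by
  rw [show (2 : PowerSeries (ZMod 2)) = PowerSeries.C (R := ZMod 2) 2 from
    (map_ofNat (PowerSeries.C (R := ZMod 2)) 2).symm]
  rw [show (2 : ZMod 2) = 0 by decide, map_zero]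

private lemma neg_self (f : PowerSeries (ZMod 2)) : -f = f := by
  rw [neg_eq_iff_add_eq_zero, ← two_mul, two_eq_zero, zero_mul]

private lemma factor_sq (k : ℕ) :
    ((1 : PowerSeries (ZMod 2)) - PowerSeries.X ^ k) ^ 2 = 1 - PowerSeries.X ^ (2 * k) := by
  have h : ((1 : PowerSeries (ZMod 2)) - PowerSeries.X ^ k) ^ 2 =
      1 - 2 * PowerSeries.X ^ k + PowerSeries.X ^ (2 * k) := by ring
  rw [h, two_eq_zero, sub_eq_add_neg 1 (PowerSeries.X ^ (2*k)), neg_self]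
  ring

private lemma phi_P (c m : ℕ) :
    phi (P c m) = ∏ n ∈ Finset.range m,
      (1 - (PowerSeries.X : PowerSeries (ZMod 2)) ^ (c * (n + 1))) := by
  simp [phi, P, PowerSeries.map_X]

private lemma phi_P_sq (c m : ℕ) : (phi (P c m)) ^ 2 = phi (P (2 * c) m) := by
  rw [phi_P, phi_P, ← Finset.prod_pow]
  apply Finset.prod_congr rfl
  intro n _
  rw [factor_sq, mul_assoc]

private lemma sq_euler (c : ℕ) (hc : 1 ≤ c) :
    (phi (euler c)) ^ 2 = phi (euler (2 * c)) := by
  ext d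
  have key : ∀ i ≤ d, PowerSeries.coeff (R := ZMod 2) i (phi (euler c)) =
      PowerSeries.coeff (R := ZMod 2) i (phi (P c (d + 1))) := by
    intro i hi
    simp only [phi, PowerSeries.coeff_map]
    rw [coeff_euler c i (d + 1) hc (by omega)]
  have hsq : ∀ f g : PowerSeries (ZMod 2),
      (∀ i ≤ d, PowerSeries.coeff (R := ZMod 2) i f = PowerSeries.coeff (R := ZMod 2) i g) →
      PowerSeries.coeff (R := ZMod 2) d (f ^ 2) = PowerSeries.coeff (R := ZMod 2) d (g ^ 2) := by
    intro f g h
    rw [pow_two, pow_two, PowerSeries.coeff_mul, PowerSeries.coeff_mul]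
    apply Finset.sum_congr rfl
    intro x hx
    rw [Finset.HasAntidiagonal.mem_antidiagonal] at hx
    rw [h x.1 (by omega), h x.2 (by omega)]
  rw [hsq _ _ key, phi_P_sq]
  simp only [phi, PowerSeries.coeff_map]
  rw [← coeff_euler (2 * c) d (d + 1) (by omega) le_rfl]

/-- Modulo 2, F_p̄(q) = (q²;q²)_∞ (q^p;q^p)_∞^((p+1)/2) / ((q;q)_∞ (q^{2p};q^{2p})_∞)
is coefficientwise congruent to (q;q)_∞ (q^p;q^p)_∞^((p−3)/2). -/
theorem barcore_genfn_mod2 (p : ℕ) (hp : p.Prime) (hodd : Odd p) (hp5 : 5 ≤ p) (n : ℕ) :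
    PowerSeries.coeff (R := ℤ) n
        (euler 2 * (euler p) ^ ((p + 1) / 2) * eulerInv 1 * eulerInv (2 * p)) ≡
      PowerSeries.coeff (R := ℤ) n (euler 1 * (euler p) ^ ((p - 3) / 2)) [ZMOD 2] := by
  apply (ZMod.intCast_eq_intCast_iff _ _ 2).mp
  have hcoeff : ∀ f : PowerSeries ℤ,
      ((PowerSeries.coeff (R := ℤ) n f : ℤ) : ZMod 2) = PowerSeries.coeff (R := ZMod 2) n (phi f) := by
    intro f; simp [phi, PowerSeries.coeff_map]
  rw [hcoeff, hcoeff]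
  congr 1
  -- inverse identities over ℤ
  have hinv1 : euler 1 * eulerInv 1 = 1 :=
    PowerSeries.mul_invOfUnit (euler 1) 1 (by rw [constCoeff_euler 1 le_rfl]; rfl)
  have hinv2p : euler (2 * p) * eulerInv (2 * p) = 1 :=
    PowerSeries.mul_invOfUnit (euler (2 * p)) 1
      (by rw [constCoeff_euler (2 * p) (by omega)]; rfl)
  set A := phi (euler 1) with hA
  set Ap := phi (euler p) with hAp
  set I1 := phi (eulerInv 1) with hI1
  set I2p := phi (eulerInv (2 * p)) with hI2p
  have h1 : A * I1 = 1 := by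
    rw [hA, hI1, ← map_mul, hinv1, map_one]
  have hE2 : phi (euler 2) = A ^ 2 := by
    rw [hA, sq_euler 1 le_rfl]
  have hE2p : phi (euler (2 * p)) = Ap ^ 2 := by
    rw [hAp, sq_euler p (by omega)]
  have h2 : Ap ^ 2 * I2p = 1 := by
    rw [← hE2p, hI2p, ← map_mul, hinv2p, map_one]
  have hexp : (p + 1) / 2 = (p - 3) / 2 + 2 := by
    obtain ⟨t, ht⟩ := hodd; omega
  simp only [map_mul, map_pow]
  rw [← hA, ← hAp, ← hI1, ← hI2p, hE2, hexp]
  calc A ^ 2 * Ap ^ ((p - 3) / 2 + 2) * I1 * I2p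
      = (A * Ap ^ ((p - 3) / 2)) * ((A * I1) * (Ap ^ 2 * I2p)) := by ring
    _ = A * Ap ^ ((p - 3) / 2) := by rw [h1, h2]; ring
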